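/- arXiv:2206.15121 — 3 statements merged into one kernel-verified Lean document; each statement's English description precedes it below -/
import Mathlib

section
/- Suppose Ω ⊂ ℝⁿ is open and φ ∈ Φ_w(Ω) satisfies (A1)_Ω with constant β ∈ (0,1). Then φ satisfies (A1) with constant β^(2·ω_n^(−1/n)+1), where ω_n is the volume of the unit ball in ℝⁿ. Concretely: for every ball B with |B| ≤ 1, all x,y ∈ B ∩ Ω, and all t ∈ [1, 1/|B|], we have β^(2ω_n^(−1/n)+1) · φ⁻¹(x,t) ≤ φ⁻¹(y,t). -/
open Real Set Metric MeasureTheory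

theorem stmt_5 (n : ℕ) (hn : 1 ≤ n) (Ω : Set (EuclideanSpace ℝ (Fin n))) (hΩ : IsOpen Ω)
    (phiInv : EuclideanSpace ℝ (Fin n) → ℝ → ℝ)
    (hnonneg : ∀ x t, 0 ≤ phiInv x t)
    (β : ℝ) (hβ : β ∈ Set.Ioo (0:ℝ) 1)
    -- (A1)_Ω with constant β
    (hA1Ω : ∀ x ∈ Ω, ∀ y ∈ Ω, ∀ t : ℝ, 1 ≤ t →
      β ^ (dist x y * t ^ ((1:ℝ)/n) + 1) * phiInv x t ≤ phiInv y t) :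
    -- (A1) with constant β ^ (2 ω_n^{-1/n} + 1), ω_n the volume of the unit ball
    ∀ z : EuclideanSpace ℝ (Fin n), ∀ R : ℝ, volume (Metric.ball z R) ≤ 1 →
      ∀ x ∈ Metric.ball z R ∩ Ω, ∀ y ∈ Metric.ball z R ∩ Ω,
        ∀ t : ℝ, 1 ≤ t → t ≤ ((volume (Metric.ball z R)).toReal)⁻¹ →
          β ^ (2 * ((volume (Metric.ball (0 : EuclideanSpace ℝ (Fin n)) 1)).toReal)
                ^ (-(1:ℝ)/n) + 1) * phiInv x t ≤ phiInv y t := by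
  haveI : Nonempty (Fin n) := Fin.pos_iff_nonempty.mp hn
  rintro z R hV x ⟨hxB, hxΩ⟩ y ⟨hyB, hyΩ⟩ t ht htle
  set ω := (volume (Metric.ball (0 : EuclideanSpace ℝ (Fin n)) 1)).toReal with hωdef
  have hωpos : 0 < ω :=
    ENNReal.toReal_pos (measure_ball_pos volume 0 one_pos).ne' measure_ball_lt_top.ne
  have hR : 0 < R := pos_of_mem_ball hxB
  have hnpos : (0:ℝ) < n := by exact_mod_cast hn
  have hnne : (n:ℝ) ≠ 0 := hnpos.ne'
  have hVeq : (volume (Metric.ball z R)).toReal = R ^ n * ω := by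
    rw [hωdef, Measure.addHaar_ball volume z hR.le, finrank_euclideanSpace_fin,
      ENNReal.toReal_mul, ENNReal.toReal_ofReal (by positivity)]
  have htpos : (0:ℝ) < t := lt_of_lt_of_le one_pos ht
  have h1 : t ^ ((1:ℝ)/n) ≤ R⁻¹ * ω ^ (-(1:ℝ)/n) := by
    have hstep : t ^ ((1:ℝ)/n) ≤ ((volume (Metric.ball z R)).toReal⁻¹) ^ ((1:ℝ)/n) :=
      Real.rpow_le_rpow htpos.le htle (by positivity)
    have heq : ((volume (Metric.ball z R)).toReal⁻¹) ^ ((1:ℝ)/n) = R⁻¹ * ω ^ (-(1:ℝ)/n) := by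
      rw [hVeq, mul_inv, Real.mul_rpow (by positivity) (by positivity)]
      congr 1
      · rw [← Real.rpow_natCast R n, ← Real.rpow_neg hR.le, ← Real.rpow_mul hR.le]
        rw [show -(n:ℝ) * (1/n) = -1 by field_simp]
        exact Real.rpow_neg_one R
      · rw [← Real.rpow_neg_one ω, ← Real.rpow_mul hωpos.le]
        congr 1
        ring
    rw [heq] at hstep
    exact hstep
  have hdist : dist x y ≤ 2 * R := by
    have h1 : dist x z < R := mem_ball.mp hxB
    have h2 : dist y z < R := mem_ball.mp hyB
    calc dist x y ≤ dist x z + dist z y := dist_triangle x z y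
      _ = dist x z + dist y z := by rw [dist_comm z y]
      _ ≤ 2 * R := by linarith
  have hexp : dist x y * t ^ ((1:ℝ)/n) + 1 ≤ 2 * ω ^ (-(1:ℝ)/n) + 1 := by
    have : dist x y * t ^ ((1:ℝ)/n) ≤ (2 * R) * (R⁻¹ * ω ^ (-(1:ℝ)/n)) :=
      mul_le_mul hdist h1 (Real.rpow_nonneg htpos.le _) (by positivity)
    have heq : (2 * R) * (R⁻¹ * ω ^ (-(1:ℝ)/n)) = 2 * ω ^ (-(1:ℝ)/n) := by
      field_simp
    linarith [this, heq ▸ this]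
  have hβle : β ^ (2 * ω ^ (-(1:ℝ)/n) + 1) ≤ β ^ (dist x y * t ^ ((1:ℝ)/n) + 1) :=
    Real.rpow_le_rpow_of_exponent_ge hβ.1 hβ.2.le hexp
  calc β ^ (2 * ω ^ (-(1:ℝ)/n) + 1) * phiInv x t
      ≤ β ^ (dist x y * t ^ ((1:ℝ)/n) + 1) * phiInv x t :=
        mul_le_mul_of_nonneg_right hβle (hnonneg x t)
    _ ≤ phiInv y t := hA1Ω x hxΩ y hyΩ t ht
end

section
/- Let φ⁻¹ be defined on Ω = U ∪ V ∪ W ⊂ ℝ² (as in the example: φ⁻¹(x,y,t) = y·t if x > 1 and y > 1, else t). Then φ⁻¹ does not satisfy (A1)_Ω: there is no β ∈ (0,1) such that β^(|p−q|·t^(1/2)+1)·φ⁻¹(p,t) ≤ φ⁻¹(q,t) for all p,q ∈ Ω and t ≥ 1. Specifically, for any β ∈ (0,1), taking p = (2,y), q = (−2,y) with y > 1 and t = 1 gives β⁵·y ≤ 1, which fails for y > β⁻⁵. -/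
open Real Set Metric

theorem stmt_12
    (U V W Ω : Set (EuclideanSpace ℝ (Fin 2)))
    (hU : U = {p | -3 < p 0 ∧ p 0 < -1 ∧ -1 < p 1})
    (hV : V = {p | 1 < p 0 ∧ p 0 < 3 ∧ -1 < p 1})
    (hW : W = {p | -1 ≤ p 0 ∧ p 0 ≤ 1 ∧ -1 < p 1 ∧ p 1 < 0})
    (hΩ : Ω = U ∪ V ∪ W)
    (phiInv : EuclideanSpace ℝ (Fin 2) → ℝ → ℝ)
    (hphiInv : ∀ p t, phiInv p t = if 1 < p 0 ∧ 1 < p 1 then p 1 * t else t) :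
    ¬ ∃ β ∈ Set.Ioo (0:ℝ) 1, ∀ p ∈ Ω, ∀ q ∈ Ω, ∀ t : ℝ, 1 ≤ t →
        β ^ (dist p q * t ^ ((1:ℝ)/2) + 1) * phiInv p t ≤ phiInv q t := by
  rintro ⟨β, ⟨hβ0, hβ1⟩, h⟩
  have hβ5 : (0:ℝ) < β ^ (5:ℕ) := by positivity
  set y : ℝ := 2 * (β ^ (5:ℕ))⁻¹ with hy
  have hy1 : 1 < y := by
    have : (1:ℝ) < (β ^ (5:ℕ))⁻¹ := by
      rw [lt_inv_comm₀ one_pos hβ5]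
      simpa using pow_lt_one₀ hβ0.le hβ1 (by norm_num)
    nlinarith
  set p : EuclideanSpace ℝ (Fin 2) := WithLp.toLp 2 ![2, y] with hp
  set q : EuclideanSpace ℝ (Fin 2) := WithLp.toLp 2 ![-2, y] with hq
  have hp0 : p 0 = 2 := rfl
  have hp1 : p 1 = y := rfl
  have hq0 : q 0 = -2 := rfl
  have hq1 : q 1 = y := rfl
  have hpΩ : p ∈ Ω := by
    rw [hΩ, hV]
    left; right
    refine ⟨by rw [hp0]; norm_num, by rw [hp0]; norm_num, by rw [hp1]; linarith⟩
  have hqΩ : q ∈ Ω := by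
    rw [hΩ, hU]
    left; left
    refine ⟨by rw [hq0]; norm_num, by rw [hq0]; norm_num, by rw [hq1]; linarith⟩
  have hdist : dist p q = 4 := by
    rw [EuclideanSpace.dist_eq]
    have : ∑ i : Fin 2, (dist (p i) (q i)) ^ 2 = 16 := by
      rw [Fin.sum_univ_two, hp0, hp1, hq0, hq1]
      rw [Real.dist_eq, Real.dist_eq]
      norm_num
    rw [this]
    rw [show (16:ℝ) = 4 ^ 2 by norm_num, Real.sqrt_sq (by norm_num)]
  have := h p hpΩ q hqΩ 1 le_rfl
  rw [hphiInv, hphiInv, hdist] at this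
  simp only [Real.one_rpow, hp0, hp1, hq0, hq1] at this
  rw [if_pos ⟨by norm_num, hy1⟩, if_neg (by rintro ⟨h2, -⟩; norm_num at h2)] at this
  have he : β ^ ((4:ℝ) * 1 + 1) = β ^ (5:ℕ) := by
    rw [show (4:ℝ) * 1 + 1 = (5:ℕ) by norm_num, Real.rpow_natCast]
  rw [he] at this
  have : β ^ (5:ℕ) * (y * 1) = 2 := by
    rw [hy, mul_one, mul_left_comm, mul_inv_cancel₀ hβ5.ne', mul_one]
  linarith [h p hpΩ q hqΩ 1 le_rfl]
end

section
/- The set Ω = U ∪ V ∪ W ⊂ ℝ² from the example (U = (−3,−1)×(−1,∞), V = (1,3)×(−1,∞), W = [−1,1]×(−1,0)) is (√2, 1)-quasi-convex: any two points of Ω at distance less than 1 can be joined by a rectifiable curve in Ω of length at most √2 times their distance. -/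
open Set Metric

/-- `Ω` is `(K,δ)`-quasi-convex; rectifiable curves are encoded by 1-Lipschitz
(arc-length) parametrizations. -/
def QuasiConvex {n : ℕ} (Ω : Set (EuclideanSpace ℝ (Fin n))) (K δ : ℝ) : Prop :=
  ∀ x ∈ Ω, ∀ y ∈ Ω, dist x y < δ →
    ∃ ℓ : ℝ, 0 ≤ ℓ ∧ ℓ ≤ K * dist x y ∧
      ∃ γ : ℝ → EuclideanSpace ℝ (Fin n), LipschitzWith 1 γ ∧ γ 0 = x ∧ γ ℓ = y ∧
        ∀ s ∈ Set.Icc 0 ℓ, γ s ∈ Ω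

def pt (u v : ℝ) : EuclideanSpace ℝ (Fin 2) := WithLp.toLp 2 ![u, v]

lemma pt_zero (u v : ℝ) : pt u v 0 = u := rfl
lemma pt_one (u v : ℝ) : pt u v 1 = v := rfl

lemma lip_line {E : Type*} [NormedAddCommGroup E] [NormedSpace ℝ E] (p v : E) (hv : ‖v‖ ≤ 1) :
    LipschitzWith 1 (fun s : ℝ => p + s • v) := by
  rw [lipschitzWith_iff_dist_le_mul]
  intro s t
  have h : p + s • v - (p + t • v) = (s - t) • v := by module
  rw [NNReal.coe_one, one_mul, dist_eq_norm, h, norm_smul, Real.dist_eq, Real.norm_eq_abs]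
  calc |s - t| * ‖v‖ ≤ |s - t| * 1 := mul_le_mul_of_nonneg_left hv (abs_nonneg _)
    _ = |s - t| := mul_one _

lemma lip_join {E : Type*} [PseudoMetricSpace E] {γ₁ γ₂ : ℝ → E} {t₀ : ℝ}
    (h₁ : LipschitzWith 1 γ₁) (h₂ : LipschitzWith 1 γ₂) (he : γ₁ t₀ = γ₂ t₀) :
    LipschitzWith 1 (fun s => if s ≤ t₀ then γ₁ s else γ₂ s) := by
  rw [lipschitzWith_iff_dist_le_mul] at *
  have key : ∀ s t : ℝ, s ≤ t →
      dist (if s ≤ t₀ then γ₁ s else γ₂ s) (if t ≤ t₀ then γ₁ t else γ₂ t) ≤ dist s t := by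
    intro s t hst
    by_cases hs : s ≤ t₀ <;> by_cases ht : t ≤ t₀ <;> simp only [hs, ht, if_true, if_false]
    · simpa using h₁ s t
    · push_neg at ht
      have d1 := h₁ s t₀; have d2 := h₂ t₀ t
      simp only [NNReal.coe_one, one_mul, Real.dist_eq] at d1 d2 ⊢
      calc dist (γ₁ s) (γ₂ t) ≤ dist (γ₁ s) (γ₂ t₀) + dist (γ₂ t₀) (γ₂ t) := dist_triangle _ _ _
        _ = dist (γ₁ s) (γ₁ t₀) + dist (γ₂ t₀) (γ₂ t) := by rw [he]
        _ ≤ |s - t₀| + |t₀ - t| := by linarith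
        _ ≤ |s - t| := by
            rw [abs_of_nonpos (by linarith), abs_of_nonpos (by linarith),
              abs_of_nonpos (by linarith)]
            linarith
    · push_neg at hs; exact absurd (hst.trans ht) (not_le.mpr hs)
    · simpa using h₂ s t
  intro s t
  rcases le_total s t with hc | hc
  · simpa using key s t hc
  · rw [dist_comm, dist_comm (s : ℝ)]
    simpa using key t s hc

def inOm (u v : ℝ) : Prop :=
  (-3 < u ∧ u < -1 ∧ -1 < v) ∨ (1 < u ∧ u < 3 ∧ -1 < v) ∨ (-1 ≤ u ∧ u ≤ 1 ∧ -1 < v ∧ v < 0)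

lemma vert {u v t : ℝ} (hin : inOm u v) (ht1 : -1 < t) (ht2 : t ≤ v) : inOm u t := by
  rcases hin with ⟨h1, h2, h3⟩ | ⟨h1, h2, h3⟩ | ⟨h1, h2, h3, h4⟩
  · exact Or.inl ⟨h1, h2, ht1⟩
  · exact Or.inr (Or.inl ⟨h1, h2, ht1⟩)
  · exact Or.inr (Or.inr ⟨h1, h2, ht1, lt_of_le_of_lt ht2 h4⟩)

lemma inOm_snd {u v : ℝ} (hin : inOm u v) : -1 < v := by
  rcases hin with ⟨_, _, h3⟩ | ⟨_, _, h3⟩ | ⟨_, _, h3, _⟩ <;> exact h3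

lemma hor {x0 x1 y0 y1 s : ℝ} (hx : inOm x0 x1) (hy : inOm y0 y1)
    (hd : |x0 - y0| < 1) (h1 : min x0 y0 ≤ s) (h2 : s ≤ max x0 y0) :
    inOm s (min x1 y1) := by
  rw [abs_lt] at hd
  rw [min_le_iff] at h1
  rw [le_max_iff] at h2
  have hm1 : ∀ a b : ℝ, -1 < a → -1 < b → -1 < min a b := fun a b ha hb => lt_min ha hb
  rcases hx with ⟨a1, a2, a3⟩ | ⟨a1, a2, a3⟩ | ⟨a1, a2, a3, a4⟩ <;>
    rcases hy with ⟨b1, b2, b3⟩ | ⟨b1, b2, b3⟩ | ⟨b1, b2, b3, b4⟩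
  · exact Or.inl ⟨by rcases h1 with h | h <;> linarith,
      by rcases h2 with h | h <;> linarith, hm1 _ _ a3 b3⟩
  · exfalso; linarith [hd.1]
  · by_cases hs : s < -1
    · exact Or.inl ⟨by rcases h1 with h | h <;> linarith, hs, hm1 _ _ a3 b3⟩
    · push_neg at hs
      exact Or.inr (Or.inr ⟨hs, by rcases h2 with h | h <;> linarith, hm1 _ _ a3 b3,
        lt_of_le_of_lt (min_le_right _ _) b4⟩)
  · exfalso; linarith [hd.2]
  · exact Or.inr (Or.inl ⟨by rcases h1 with h | h <;> linarith,
      by rcases h2 with h | h <;> linarith, hm1 _ _ a3 b3⟩)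
  · by_cases hs : 1 < s
    · exact Or.inr (Or.inl ⟨hs, by rcases h2 with h | h <;> linarith, hm1 _ _ a3 b3⟩)
    · push_neg at hs
      exact Or.inr (Or.inr ⟨by rcases h1 with h | h <;> linarith, hs, hm1 _ _ a3 b3,
        lt_of_le_of_lt (min_le_right _ _) b4⟩)
  · by_cases hs : s < -1
    · exact Or.inl ⟨by rcases h1 with h | h <;> linarith, hs, hm1 _ _ a3 b3⟩
    · push_neg at hs
      exact Or.inr (Or.inr ⟨hs, by rcases h2 with h | h <;> linarith, hm1 _ _ a3 b3,
        lt_of_le_of_lt (min_le_left _ _) a4⟩)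
  · by_cases hs : 1 < s
    · exact Or.inr (Or.inl ⟨hs, by rcases h2 with h | h <;> linarith, hm1 _ _ a3 b3⟩)
    · push_neg at hs
      exact Or.inr (Or.inr ⟨by rcases h1 with h | h <;> linarith, hs, hm1 _ _ a3 b3,
        lt_of_le_of_lt (min_le_left _ _) a4⟩)
  · exact Or.inr (Or.inr ⟨by rcases h1 with h | h <;> linarith,
      by rcases h2 with h | h <;> linarith, hm1 _ _ a3 b3,
      lt_of_le_of_lt (min_le_left _ _) a4⟩)

lemma taxicab (p q : ℝ) : |p| + |q| ≤ Real.sqrt 2 * Real.sqrt (p ^ 2 + q ^ 2) := by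
  rw [← Real.sqrt_mul (by norm_num)]
  rw [show (|p| + |q|) = Real.sqrt ((|p| + |q|) ^ 2) from (Real.sqrt_sq (by positivity)).symm]
  apply Real.sqrt_le_sqrt
  nlinarith [sq_nonneg (|p| - |q|), sq_abs p, sq_abs q, abs_nonneg p, abs_nonneg q]

set_option maxHeartbeats 2000000 in
theorem stmt_13
    (U V W Ω : Set (EuclideanSpace ℝ (Fin 2)))
    (hU : U = {p | -3 < p 0 ∧ p 0 < -1 ∧ -1 < p 1})
    (hV : V = {p | 1 < p 0 ∧ p 0 < 3 ∧ -1 < p 1})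
    (hW : W = {p | -1 ≤ p 0 ∧ p 0 ≤ 1 ∧ -1 < p 1 ∧ p 1 < 0})
    (hΩ : Ω = U ∪ V ∪ W) :
    QuasiConvex Ω (Real.sqrt 2) 1 := by
  subst hU hV hW hΩ
  intro x hx y hy hxy
  have hmemiff : ∀ p : EuclideanSpace ℝ (Fin 2), inOm (p 0) (p 1) →
      p ∈ ({p : EuclideanSpace ℝ (Fin 2) | -3 < p 0 ∧ p 0 < -1 ∧ -1 < p 1} ∪
        {p : EuclideanSpace ℝ (Fin 2) | 1 < p 0 ∧ p 0 < 3 ∧ -1 < p 1} ∪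
        {p : EuclideanSpace ℝ (Fin 2) | -1 ≤ p 0 ∧ p 0 ≤ 1 ∧ -1 < p 1 ∧ p 1 < 0}) := by
    intro p hp
    rcases hp with h | h | h
    · exact Or.inl (Or.inl h)
    · exact Or.inl (Or.inr h)
    · exact Or.inr h
  have hx' : inOm (x 0) (x 1) := by
    simp only [Set.mem_union, Set.mem_setOf_eq] at hx
    unfold inOm; tauto
  have hy' : inOm (y 0) (y 1) := by
    simp only [Set.mem_union, Set.mem_setOf_eq] at hy
    unfold inOm; tauto
  -- distance facts
  have hdist : dist x y = Real.sqrt ((x 0 - y 0) ^ 2 + (x 1 - y 1) ^ 2) := by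
    rw [EuclideanSpace.dist_eq]
    congr 1
    rw [Fin.sum_univ_two]
    simp [Real.dist_eq, sq_abs]
  have habs0 : |x 0 - y 0| ≤ dist x y := by
    rw [hdist, show |x 0 - y 0| = Real.sqrt ((x 0 - y 0) ^ 2) from (Real.sqrt_sq_eq_abs _).symm]
    exact Real.sqrt_le_sqrt (by nlinarith [sq_nonneg (x 1 - y 1)])
  have habs1 : |x 1 - y 1| ≤ dist x y := by
    rw [hdist, show |x 1 - y 1| = Real.sqrt ((x 1 - y 1) ^ 2) from (Real.sqrt_sq_eq_abs _).symm]
    exact Real.sqrt_le_sqrt (by nlinarith [sq_nonneg (x 0 - y 0)])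
  have hd1 : |x 0 - y 0| < 1 := lt_of_le_of_lt habs0 hxy
  -- basic quantities
  set h : ℝ := min (x 1) (y 1) with hH
  set a : ℝ := x 1 - h with hA
  set b : ℝ := |y 0 - x 0| with hB
  set c : ℝ := y 1 - h with hC
  set σ : ℝ := (y 0 - x 0) / b with hS
  have hhx : h ≤ x 1 := min_le_left _ _
  have hhy : h ≤ y 1 := min_le_right _ _
  have hh1 : -1 < h := lt_min (inOm_snd hx') (inOm_snd hy')
  have ha : 0 ≤ a := by rw [hA]; linarith
  have hb : 0 ≤ b := abs_nonneg _
  have hc : 0 ≤ c := by rw [hC]; linarith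
  have hbσ : b * σ = y 0 - x 0 := by
    rcases eq_or_ne (y 0 - x 0) 0 with h0 | h0
    · rw [hS, hB, h0]; simp
    · have hbne : b ≠ 0 := by rw [hB]; exact abs_ne_zero.mpr h0
      rw [hS, mul_comm, div_mul_cancel₀ _ hbne]
  have hσ : |σ| ≤ 1 := by
    rcases eq_or_ne b 0 with h0 | h0
    · rw [hS, h0]; simp
    · rw [hS, abs_div, hB, abs_abs]
      rw [hB] at h0
      rw [div_self h0]
  have hac : a + c = |x 1 - y 1| := by
    rcases le_total (x 1) (y 1) with hle | hle
    · rw [abs_of_nonpos (by linarith), hA, hC, hH, min_eq_left hle]; ring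
    · rw [abs_of_nonneg (by linarith), hA, hC, hH, min_eq_right hle]; ring
  -- the curve
  refine ⟨a + b + c, by linarith, ?_, ?_⟩
  · have := taxicab (x 0 - y 0) (x 1 - y 1)
    rw [← hdist] at this
    rw [show a + b + c = |x 1 - y 1| + b by linarith, hB, abs_sub_comm (y 0) (x 0)]
    linarith
  · set v₁ : EuclideanSpace ℝ (Fin 2) := pt 0 (-1) with hv₁
    set v₂ : EuclideanSpace ℝ (Fin 2) := pt σ 0 with hv₂
    set v₃ : EuclideanSpace ℝ (Fin 2) := pt 0 1 with hv₃
    set p₂ : EuclideanSpace ℝ (Fin 2) := pt (x 0) h - a • v₂ with hp₂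
    set p₃ : EuclideanSpace ℝ (Fin 2) := pt (y 0) h - (a + b) • v₃ with hp₃
    have nv₁ : ‖v₁‖ ≤ 1 := by
      rw [hv₁]
      simp [pt, EuclideanSpace.norm_eq, Fin.sum_univ_two]
    have nv₂ : ‖v₂‖ ≤ 1 := by
      rw [hv₂, show ‖(pt σ 0 : EuclideanSpace ℝ (Fin 2))‖ = |σ| by
        simp [pt, EuclideanSpace.norm_eq, Fin.sum_univ_two, Real.sqrt_sq_eq_abs]]
      exact hσ
    have nv₃ : ‖v₃‖ ≤ 1 := by
      rw [hv₃]
      simp [pt, EuclideanSpace.norm_eq, Fin.sum_univ_two]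
    refine ⟨fun s => if s ≤ a then x + s • v₁ else
      if s ≤ a + b then p₂ + s • v₂ else p₃ + s • v₃, ?_, ?_, ?_, ?_⟩
    · -- Lipschitz
      have inner : LipschitzWith 1 (fun s : ℝ =>
          if s ≤ a + b then p₂ + s • v₂ else p₃ + s • v₃) := by
        apply lip_join (lip_line p₂ v₂ nv₂) (lip_line p₃ v₃ nv₃)
        ext i
        fin_cases i
        · show p₂ 0 + (a + b) * v₂ 0 = p₃ 0 + (a + b) * v₃ 0
          rw [hp₂, hp₃, hv₂, hv₃]
          show (pt (x 0) h) 0 - a * (pt σ 0) 0 + (a + b) * (pt σ 0) 0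
            = (pt (y 0) h) 0 - (a + b) * (pt 0 1) 0 + (a + b) * (pt 0 1) 0
          simp only [pt_zero]
          nlinarith [hbσ]
        · show p₂ 1 + (a + b) * v₂ 1 = p₃ 1 + (a + b) * v₃ 1
          rw [hp₂, hp₃, hv₂, hv₃]
          show (pt (x 0) h) 1 - a * (pt σ 0) 1 + (a + b) * (pt σ 0) 1
            = (pt (y 0) h) 1 - (a + b) * (pt 0 1) 1 + (a + b) * (pt 0 1) 1
          simp only [pt_one]
          ring
      have outer := lip_join (lip_line x v₁ nv₁) inner (by
        rw [if_pos (by linarith : a ≤ a + b)]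
        ext i
        fin_cases i
        · show x 0 + a * v₁ 0 = p₂ 0 + a * v₂ 0
          rw [hp₂, hv₁, hv₂]
          show x 0 + a * (pt 0 (-1)) 0 = (pt (x 0) h) 0 - a * (pt σ 0) 0 + a * (pt σ 0) 0
          simp only [pt_zero]; ring
        · show x 1 + a * v₁ 1 = p₂ 1 + a * v₂ 1
          rw [hp₂, hv₁, hv₂]
          show x 1 + a * (pt 0 (-1)) 1 = (pt (x 0) h) 1 - a * (pt σ 0) 1 + a * (pt σ 0) 1
          simp only [pt_one]; rw [hA]; ring)
      exact outer
    · -- γ 0 = x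
      simp only [if_pos ha]
      simp
    · -- γ (a+b+c) = y
      by_cases h1 : a + b + c ≤ a
      · have hb0 : b = 0 := le_antisymm (by linarith) hb
        have hc0 : c = 0 := le_antisymm (by linarith) hc
        have hy0 : y 0 = x 0 := by
          have h0 : |y 0 - x 0| = 0 := by rw [← hB]; exact hb0
          have := sub_eq_zero.mp (abs_eq_zero.mp h0)
          linarith
        have hy1 : y 1 = h := by rw [hC] at hc0; linarith
        simp only [if_pos h1]
        ext i
        fin_cases i
        · show x 0 + (a + b + c) * v₁ 0 = y 0
          rw [hv₁, pt_zero, hy0]; ring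
        · show x 1 + (a + b + c) * v₁ 1 = y 1
          rw [hv₁, pt_one, hy1, hb0, hc0, hA]; ring
      · push_neg at h1
        by_cases h2 : a + b + c ≤ a + b
        · have hc0 : c = 0 := le_antisymm (by linarith) hc
          have hy1 : y 1 = h := by rw [hC] at hc0; linarith
          simp only [if_neg (not_le.mpr h1), if_pos h2]
          ext i
          fin_cases i
          · show p₂ 0 + (a + b + c) * v₂ 0 = y 0
            rw [hp₂, hv₂]
            show (pt (x 0) h) 0 - a * (pt σ 0) 0 + (a + b + c) * (pt σ 0) 0 = y 0
            simp only [pt_zero]; rw [hc0]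
            nlinarith [hbσ]
          · show p₂ 1 + (a + b + c) * v₂ 1 = y 1
            rw [hp₂, hv₂]
            show (pt (x 0) h) 1 - a * (pt σ 0) 1 + (a + b + c) * (pt σ 0) 1 = y 1
            simp only [pt_one]; rw [hy1]; ring
        · simp only [if_neg (not_le.mpr h1), if_neg h2]
          ext i
          fin_cases i
          · show p₃ 0 + (a + b + c) * v₃ 0 = y 0
            rw [hp₃, hv₃]
            show (pt (y 0) h) 0 - (a + b) * (pt 0 1) 0 + (a + b + c) * (pt 0 1) 0 = y 0
            simp only [pt_zero]; ring
          · show p₃ 1 + (a + b + c) * v₃ 1 = y 1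
            rw [hp₃, hv₃]
            show (pt (y 0) h) 1 - (a + b) * (pt 0 1) 1 + (a + b + c) * (pt 0 1) 1 = y 1
            simp only [pt_one]; rw [hC]; ring
    · -- membership
      intro s hs
      obtain ⟨hs0, hsl⟩ := hs
      by_cases h1 : s ≤ a
      · simp only [if_pos h1]
        apply hmemiff
        have c0 : (x + s • v₁) 0 = x 0 := by
          show x 0 + s * v₁ 0 = x 0
          rw [hv₁, pt_zero]; ring
        have c1 : (x + s • v₁) 1 = x 1 - s := by
          show x 1 + s * v₁ 1 = x 1 - s
          rw [hv₁, pt_one]; ring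
        rw [c0, c1]
        apply vert hx' (by rw [hA] at h1; linarith) (by linarith)
      · push_neg at h1
        by_cases h2 : s ≤ a + b
        · simp only [if_neg (not_le.mpr h1), if_pos h2]
          apply hmemiff
          have c0 : (p₂ + s • v₂) 0 = x 0 + (s - a) * σ := by
            show p₂ 0 + s * v₂ 0 = x 0 + (s - a) * σ
            rw [hp₂, hv₂]
            show (pt (x 0) h) 0 - a * (pt σ 0) 0 + s * (pt σ 0) 0 = x 0 + (s - a) * σ
            simp only [pt_zero]; ring
          have c1 : (p₂ + s • v₂) 1 = h := by
            show p₂ 1 + s * v₂ 1 = h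
            rw [hp₂, hv₂]
            show (pt (x 0) h) 1 - a * (pt σ 0) 1 + s * (pt σ 0) 1 = h
            simp only [pt_one]; ring
          rw [c0, c1, hH]
          have hrange : min (x 0) (y 0) ≤ x 0 + (s - a) * σ ∧
              x 0 + (s - a) * σ ≤ max (x 0) (y 0) := by
            rcases lt_or_eq_of_le hb with hb0 | hb0
            · rcases le_total (x 0) (y 0) with hxy0 | hxy0
              · have hbv : b = y 0 - x 0 := by rw [hB, abs_of_nonneg (by linarith)]
                have hσ1 : σ = 1 := by
                  rw [hS, hbv, div_self (by linarith)]
                rw [hσ1, mul_one]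
                constructor
                · exact le_trans (min_le_left _ _) (by linarith)
                · exact le_trans (by linarith) (le_max_right _ _)
              · have hbv : b = x 0 - y 0 := by rw [hB, abs_of_nonpos (by linarith)]; ring
                have hσ1 : σ = -1 := by
                  rw [hS, show y 0 - x 0 = -b by linarith, neg_div, div_self (by linarith)]
                rw [hσ1]
                constructor
                · exact le_trans (min_le_right _ _) (by nlinarith)
                · exact le_trans (by nlinarith) (le_max_left _ _)
            · exfalso
              rw [← hb0] at h2
              linarith
          exact hor hx' hy' hd1 hrange.1 hrange.2
        · push_neg at h2
          simp only [if_neg (not_le.mpr h1), if_neg (not_le.mpr h2)]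
          apply hmemiff
          have c0 : (p₃ + s • v₃) 0 = y 0 := by
            show p₃ 0 + s * v₃ 0 = y 0
            rw [hp₃, hv₃]
            show (pt (y 0) h) 0 - (a + b) * (pt 0 1) 0 + s * (pt 0 1) 0 = y 0
            simp only [pt_zero]; ring
          have c1 : (p₃ + s • v₃) 1 = h + (s - a - b) := by
            show p₃ 1 + s * v₃ 1 = h + (s - a - b)
            rw [hp₃, hv₃]
            show (pt (y 0) h) 1 - (a + b) * (pt 0 1) 1 + s * (pt 0 1) 1 = h + (s - a - b)
            simp only [pt_one]; ring
          rw [c0, c1]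
          apply vert hy' (by linarith) (by rw [hC] at hsl; linarith)
end
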